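/- Let A₀ be the adjacency matrix of the square graph Q₂ (the 4-cycle, which is 2-regular), and define recursively A_{m+1} = fromBlocks A_m 1 1 A_m. Then for every N, the largest eigenvalue of A_N is N + 2, the second largest eigenvalue of A_N is N, and hence the spectral gap λ₁ - λ₂ of the normalized matrix W_N = A_N / (N + 2) is exactly 2 / (N + 2). -/

import Mathlib

/-- The index type of the `N`-fold iterated graph cylinder matrix over base index `V`. -/
def CylIdx (V : Type*) : ℕ → Type _
  | 0 => V
  | N + 1 => CylIdx V N ⊕ CylIdx V N

instance instFintypeCylIdx (V : Type*) [Fintype V] : ∀ N, Fintype (CylIdx V N)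
  | 0 => ‹Fintype V›
  | N + 1 => letI := instFintypeCylIdx V N
             inferInstanceAs (Fintype (CylIdx V N ⊕ CylIdx V N))

instance instDecidableEqCylIdx (V : Type*) [DecidableEq V] : ∀ N, DecidableEq (CylIdx V N)
  | 0 => ‹DecidableEq V›
  | N + 1 => letI := instDecidableEqCylIdx V N
             inferInstanceAs (DecidableEq (CylIdx V N ⊕ CylIdx V N))

/-- The iterated graph cylinder matrices: `A_{m+1} = [[A_m, I], [I, A_m]]`. -/
def iterCyl {V : Type*} [DecidableEq V] {R : Type*} [CommRing R] (A₀ : Matrix V V R) :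
    ∀ N : ℕ, Matrix (CylIdx V N) (CylIdx V N) R
  | 0 => A₀
  | N + 1 => Matrix.fromBlocks (iterCyl A₀ N) 1 1 (iterCyl A₀ N)

/-- The hypercube graph `Q_n` on `Fin n → Bool`: two vertices are adjacent iff they
differ in exactly one coordinate.  `Q_2` is the square (the 4-cycle). -/
def hypercube (n : ℕ) : SimpleGraph (Fin n → Bool) where
  Adj u v := ∃! i, u i ≠ v i
  symm := by
    constructor
    rintro u v ⟨i, hi, huniq⟩
    exact ⟨i, Ne.symm hi, fun j hj => huniq j (Ne.symm hj)⟩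
  loopless := by
    constructor
    rintro u ⟨i, hi, -⟩
    exact hi rfl

noncomputable instance (n : ℕ) : DecidableRel (hypercube n).Adj := Classical.decRel _

open Polynomial Matrix

section Aux

variable {n : Type*} [Fintype n] [DecidableEq n]

lemma evalCharpoly (M : Matrix n n ℝ) (x : ℝ) :
    M.charpoly.eval x = (x • (1 : Matrix n n ℝ) - M).det := by
  rw [Matrix.charpoly, ← Polynomial.coe_evalRingHom, RingHom.map_det]
  congr 1
  ext i j
  by_cases h : i = j <;>
    simp [charmatrix_apply, Matrix.one_apply, h, Matrix.diagonal_apply]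

lemma adj_iff (u v : Fin 2 → Bool) :
    (hypercube 2).Adj u v ↔ ((u 0 != v 0) ^^ (u 1 != v 1)) = true := by
  revert u v
  show ∀ u v : Fin 2 → Bool, ((∃! i, u i ≠ v i) ↔ _)
  simp only [ExistsUnique]; decide

/-- enumeration of the vertices of `Q₂` -/
def f4 : Fin 4 → (Fin 2 → Bool) := ![![false,false],![true,false],![false,true],![true,true]]

noncomputable def e4 : Fin 4 ≃ (Fin 2 → Bool) := Equiv.ofBijective f4 (by decide)

lemma charpoly_base :
    ((hypercube 2).adjMatrix ℝ).charpoly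
      = ((({2, 0, 0, -2} : Multiset ℝ)).map fun r => X - C r).prod := by
  apply Polynomial.funext
  intro x
  rw [evalCharpoly, ← Matrix.det_submatrix_equiv_self e4]
  have h : (x • (1 : Matrix (Fin 2 → Bool) (Fin 2 → Bool) ℝ)
      - (hypercube 2).adjMatrix ℝ).submatrix e4 e4
      = !![x,-1,-1,0; -1,x,0,-1; -1,0,x,-1; 0,-1,-1,x] := by
    ext i j
    fin_cases i <;> fin_cases j <;>
      simp [e4, Equiv.ofBijective_apply, f4, adj_iff, Matrix.one_apply] <;>
        exact fun h => absurd h (by decide)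
  rw [h]
  simp [Matrix.det_succ_row_zero, Fin.sum_univ_succ]
  simp [Fin.succAbove, Fin.lt_def]
  ring

lemma eval_prodXsubC (s : Multiset ℝ) (x : ℝ) :
    ((s.map fun r => X - C r).prod).eval x = (s.map fun r => x - r).prod := by
  rw [eval_multiset_prod, Multiset.map_map]
  congr 1
  apply Multiset.map_congr rfl
  intro r _
  simp

/-- determinant of the cylinder block matrix -/
lemma det_cyl (B : Matrix n n ℝ) (c : ℝ) :
    (fromBlocks B (c • (1 : Matrix n n ℝ)) (c • 1) B).det
      = (B + c • 1).det * (B - c • 1).det := by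
  set M := fromBlocks B (c • (1 : Matrix n n ℝ)) (c • 1) B
  set P : Matrix (n ⊕ n) (n ⊕ n) ℝ := fromBlocks 1 1 1 (-1) with hPdef
  have hP : P.det = (-2 : ℝ) ^ Fintype.card n := by
    have : Invertible (1 : Matrix n n ℝ) := invertibleOne
    rw [hPdef, Matrix.det_fromBlocks₁₁]
    have h : (-1 : Matrix n n ℝ) - 1 * ⅟(1 : Matrix n n ℝ) * 1 = (-2 : ℝ) • 1 := by
      simp
      norm_num [two_smul, neg_add]
    rw [h, Matrix.det_smul]
    simp
  have key : P * M * P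
      = fromBlocks ((2:ℝ) • (B + c • 1)) 0 0 ((2:ℝ) • (B - c • 1)) := by
    rw [hPdef]
    show fromBlocks 1 1 1 (-1) * fromBlocks B (c • (1 : Matrix n n ℝ)) (c • 1) B
        * fromBlocks 1 1 1 (-1) = _
    rw [Matrix.fromBlocks_multiply, Matrix.fromBlocks_multiply]
    simp [two_smul, smul_sub, smul_add]
    refine ⟨?_, ?_, ?_⟩ <;> abel
  have hdets : P.det * M.det * P.det
      = ((2:ℝ) ^ Fintype.card n * (B + c • 1).det)
        * ((2:ℝ) ^ Fintype.card n * (B - c • 1).det) := by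
    rw [← Matrix.det_mul, ← Matrix.det_mul, key, Matrix.det_fromBlocks_zero₂₁,
      Matrix.det_smul, Matrix.det_smul]
  rw [hP] at hdets
  have h2 : ((-2 : ℝ) ^ Fintype.card n) * ((-2 : ℝ) ^ Fintype.card n)
      = ((2:ℝ) ^ Fintype.card n) * ((2:ℝ) ^ Fintype.card n) := by
    rw [← mul_pow, ← mul_pow]; norm_num
  have hne : ((2:ℝ) ^ Fintype.card n) * ((2:ℝ) ^ Fintype.card n) ≠ 0 := by positivity
  apply mul_left_cancel₀ hne
  calc ((2:ℝ) ^ Fintype.card n) * ((2:ℝ) ^ Fintype.card n) * M.det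
      = (-2 : ℝ) ^ Fintype.card n * M.det * (-2 : ℝ) ^ Fintype.card n := by
        rw [← h2]; ring
    _ = _ := by rw [hdets]; ring

end Aux

/-- The multiset of eigenvalues of the `N`-th iterated cylinder of `Q₂`. -/
noncomputable def specMS : ℕ → Multiset ℝ
  | 0 => {2, 0, 0, -2}
  | N + 1 => (specMS N).map (· + 1) + (specMS N).map (· - 1)

lemma charpoly_iterCyl (N : ℕ) :
    (iterCyl ((hypercube 2).adjMatrix ℝ) N).charpoly
      = ((specMS N).map fun r => X - C r).prod := by
  induction N with
  | zero => exact charpoly_base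
  | succ N ih =>
    apply Polynomial.funext
    intro x
    set A := iterCyl ((hypercube 2).adjMatrix ℝ) N with hA
    have h1 : iterCyl ((hypercube 2).adjMatrix ℝ) (N + 1)
        = Matrix.fromBlocks A 1 1 A := rfl
    rw [show (iterCyl ((hypercube 2).adjMatrix ℝ) (N + 1)).charpoly = (Matrix.fromBlocks A 1 1 A : Matrix (CylIdx (Fin 2 → Bool) N ⊕ CylIdx (Fin 2 → Bool) N) _ ℝ).charpoly from rfl, evalCharpoly]
    have h2 : x • (1 : Matrix (CylIdx (Fin 2 → Bool) N ⊕ CylIdx (Fin 2 → Bool) N) _ ℝ)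
        - Matrix.fromBlocks A 1 1 A
        = Matrix.fromBlocks (x • 1 - A) ((-1 : ℝ) • 1) ((-1 : ℝ) • 1) (x • 1 - A) := by
      ext (i | i) (j | j) <;>
        simp [Matrix.fromBlocks, Matrix.one_apply]
    rw [h2, det_cyl]
    have h3 : x • (1 : Matrix (CylIdx (Fin 2 → Bool) N) (CylIdx (Fin 2 → Bool) N) ℝ) - A
        + (-1 : ℝ) • 1 = (x - 1) • 1 - A := by
      rw [sub_smul, neg_smul, one_smul]; abel
    have h4 : x • (1 : Matrix (CylIdx (Fin 2 → Bool) N) (CylIdx (Fin 2 → Bool) N) ℝ) - A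
        - (-1 : ℝ) • 1 = (x + 1) • 1 - A := by
      rw [add_smul, neg_smul, one_smul]; abel
    rw [h3, h4, ← evalCharpoly, ← evalCharpoly, ih, eval_prodXsubC, eval_prodXsubC,
      eval_prodXsubC,
      show specMS (N + 1) = (specMS N).map (· + 1) + (specMS N).map (· - 1) from rfl,
      Multiset.map_add, Multiset.prod_add, Multiset.map_map, Multiset.map_map]
    congr 1
    · apply congrArg
      apply Multiset.map_congr rfl
      intro r _
      simp only [Function.comp_apply]
      ring
    · apply congrArg
      apply Multiset.map_congr rfl
      intro r _
      simp only [Function.comp_apply]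
      ring

lemma card_specMS (N : ℕ) :
    Multiset.card (specMS N) = Fintype.card (CylIdx (Fin 2 → Bool) N) := by
  have h := congrArg Polynomial.natDegree (charpoly_iterCyl N)
  rwa [Matrix.charpoly_natDegree_eq_dim, Polynomial.natDegree_multiset_prod_X_sub_C_eq_card,
    eq_comm] at h

lemma charpoly_smul_iterCyl (N : ℕ) {c : ℝ} (hc : c ≠ 0) :
    (c • iterCyl ((hypercube 2).adjMatrix ℝ) N).charpoly
      = (((specMS N).map fun r => c * r).map fun r => X - C r).prod := by
  apply Polynomial.funext
  intro x
  set A := iterCyl ((hypercube 2).adjMatrix ℝ) N with hA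
  rw [evalCharpoly]
  have h1 : x • (1 : Matrix (CylIdx (Fin 2 → Bool) N) (CylIdx (Fin 2 → Bool) N) ℝ) - c • A
      = c • ((c⁻¹ * x) • 1 - A) := by
    rw [smul_sub, smul_smul, ← mul_assoc, mul_inv_cancel₀ hc, one_mul]
  rw [h1, Matrix.det_smul, ← evalCharpoly, charpoly_iterCyl, eval_prodXsubC, eval_prodXsubC,
    Multiset.map_map, ← card_specMS]
  rw [show (c ^ Multiset.card (specMS N)) = ((specMS N).map fun _ => c).prod by
    rw [Multiset.map_const', Multiset.prod_replicate]]
  rw [← Multiset.prod_map_mul]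
  congr 1
  apply Multiset.map_congr rfl
  intro r _
  simp only [Function.comp_apply]
  field_simp
  try ring

lemma specMS_struct (N : ℕ) : ∃ t : Multiset ℝ,
    specMS N = ((N : ℝ) + 2) ::ₘ t ∧ (N : ℝ) ∈ t ∧ ∀ x ∈ t, x ≤ (N : ℝ) := by
  induction N with
  | zero =>
    refine ⟨{0, 0, -2}, ?_, ?_, ?_⟩
    · show ({2, 0, 0, -2} : Multiset ℝ) = (((0 : ℕ) : ℝ) + 2) ::ₘ {0, 0, -2}
      norm_num
    · norm_num
    · intro x hx
      fin_cases hx <;> norm_num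
  | succ N ih =>
    obtain ⟨t, hs, hmem, hb⟩ := ih
    refine ⟨t.map (· + 1) + (((N : ℝ) + 1) ::ₘ t.map (· - 1)), ?_, ?_, ?_⟩
    · show (specMS N).map (· + 1) + (specMS N).map (· - 1) = _
      rw [hs, Multiset.map_cons, Multiset.map_cons]
      push_cast
      rw [show ((N : ℝ) + 2 + 1) = (N + 1 + 2 : ℝ) by ring,
        show ((N : ℝ) + 2 - 1) = (N + 1 : ℝ) by ring]
      rw [Multiset.cons_add, Multiset.add_cons]
    · push_cast
      exact Multiset.mem_add.2 (Or.inr (Multiset.mem_cons_self _ _))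
    · intro x hx
      push_cast
      rcases Multiset.mem_add.1 hx with h | h
      · obtain ⟨y, hy, rfl⟩ := Multiset.mem_map.1 h
        have := hb y hy; linarith
      · rcases Multiset.mem_cons.1 h with h | h
        · rw [h]
        · obtain ⟨y, hy, rfl⟩ := Multiset.mem_map.1 h
          have := hb y hy; linarith

/-- sorted structure extraction -/
lemma sort_two {s t : Multiset ℝ} {a b : ℝ} (hs : s = a ::ₘ t) (hmem : b ∈ t)
    (hb : ∀ x ∈ t, x ≤ b) (hab : b ≤ a) :
    ∃ l : List ℝ, Multiset.sort s (· ≥ ·) = a :: b :: l := by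
  have ht : t = b ::ₘ t.erase b := (Multiset.cons_erase hmem).symm
  refine ⟨Multiset.sort (t.erase b) (· ≥ ·), ?_⟩
  have h2 : Multiset.sort t (· ≥ ·) = b :: Multiset.sort (t.erase b) (· ≥ ·) := by
    conv_lhs => rw [ht]
    exact Multiset.sort_cons _ _ (· ≥ ·) fun x hx => hb x (Multiset.mem_of_mem_erase hx)
  rw [hs, Multiset.sort_cons _ _ (· ≥ ·) fun x hx => le_trans (hb x hx) hab, h2]

theorem iterCyl_square_spectral_gap (N : ℕ) :
    (Multiset.sort (iterCyl ((hypercube 2).adjMatrix ℝ) N).charpoly.roots (· ≥ ·))[0]? =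
      some ((N : ℝ) + 2) ∧
    (Multiset.sort (iterCyl ((hypercube 2).adjMatrix ℝ) N).charpoly.roots (· ≥ ·))[1]? =
      some (N : ℝ) ∧
    (Multiset.sort
        ((((N : ℝ) + 2)⁻¹ • iterCyl ((hypercube 2).adjMatrix ℝ) N).charpoly.roots) (· ≥ ·))[0]?.getD 0 -
      (Multiset.sort
        ((((N : ℝ) + 2)⁻¹ • iterCyl ((hypercube 2).adjMatrix ℝ) N).charpoly.roots) (· ≥ ·))[1]?.getD 0 =
      2 / ((N : ℝ) + 2) := by
  have hN2 : (0 : ℝ) < (N : ℝ) + 2 := by positivity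
  have hc : ((N : ℝ) + 2)⁻¹ ≠ 0 := by positivity
  have hcpos : (0 : ℝ) < ((N : ℝ) + 2)⁻¹ := by positivity
  obtain ⟨t, hs, hmem, hb⟩ := specMS_struct N
  -- roots of the unnormalized matrix
  have hroots : (iterCyl ((hypercube 2).adjMatrix ℝ) N).charpoly.roots = specMS N := by
    rw [charpoly_iterCyl, Polynomial.roots_multiset_prod_X_sub_C]
  have hroots' : (((N : ℝ) + 2)⁻¹ • iterCyl ((hypercube 2).adjMatrix ℝ) N).charpoly.roots
      = (specMS N).map fun r => ((N : ℝ) + 2)⁻¹ * r := by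
    rw [charpoly_smul_iterCyl N hc, Polynomial.roots_multiset_prod_X_sub_C]
  obtain ⟨l, hl⟩ := sort_two hs hmem hb (by linarith)
  have hs' : (specMS N).map (fun r => ((N : ℝ) + 2)⁻¹ * r)
      = (1 : ℝ) ::ₘ t.map (fun r => ((N : ℝ) + 2)⁻¹ * r) := by
    rw [hs, Multiset.map_cons, inv_mul_cancel₀ (by positivity)]
  obtain ⟨l', hl'⟩ := sort_two hs'
    (Multiset.mem_map_of_mem _ hmem)
    (fun x hx => by
      obtain ⟨y, hy, rfl⟩ := Multiset.mem_map.1 hx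
      exact mul_le_mul_of_nonneg_left (hb y hy) (le_of_lt hcpos))
    (by
      rw [show (1 : ℝ) = ((N : ℝ) + 2)⁻¹ * ((N : ℝ) + 2) by
        rw [inv_mul_cancel₀ (by positivity)]]
      apply mul_le_mul_of_nonneg_left (by linarith) (le_of_lt hcpos))
  refine ⟨?_, ?_, ?_⟩
  · rw [hroots, hl]; simp
  · rw [hroots, hl]; simp
  · rw [hroots', hl']
    simp only [List.getElem?_cons_zero, List.getElem?_cons_succ, Option.getD_some]
    field_simp
    ring
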